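/- Let T be a pruned tree of sequences and ξ an inductive probability measure on T that is free, i.e. ⨅_{n ∈ ℕ} ξ(x↾n) = 0 for every x ∈ lim T. Then T⁺ := {t ∈ T : ξ(t) > 0} is a perfect tree: T⁺ is nonempty, closed under prefixes, and for every t ∈ T⁺ there exists s ∈ T⁺ with t a prefix of s such that s has at least two successors in T⁺. -/

import Mathlib

open scoped ENNReal
open MeasureTheory

noncomputable section

/-- A tree of sequences: a nonempty set of finite lists of naturals closed under prefixes. -/
def IsTree (T : Set (List ℕ)) : Prop :=
  T.Nonempty ∧ ∀ s t : List ℕ, s <+: t → t ∈ T → s ∈ T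

/-- `t` is a maximal node of `T`: it has no successor in `T`. -/
def IsMaxNode (T : Set (List ℕ)) (t : List ℕ) : Prop :=
  ∀ k : ℕ, t ++ [k] ∉ T

/-- A probability tree on `T`. -/
def IsProbTree (T : Set (List ℕ)) (p : List ℕ → ℕ → ℝ≥0∞) : Prop :=
  ∀ t ∈ T, ¬ IsMaxNode T t →
    (∀ k : ℕ, t ++ [k] ∉ T → p t k = 0) ∧ (∑' k : ℕ, p t k = 1)

/-- The measure induced by a probability tree: `Ξ_p(t) = ∏_{i<|t|} p (t↾i) (t i)`. -/
def Xi (p : List ℕ → ℕ → ℝ≥0∞) (t : List ℕ) : ℝ≥0∞ :=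
  ∏ i ∈ Finset.range t.length, p (t.take i) (t.getD i 0)

/-- An inductive probability measure on `T`. -/
def IsIPM (T : Set (List ℕ)) (ξ : List ℕ → ℝ≥0∞) : Prop :=
  ξ [] = 1 ∧ ∀ t ∈ T, ¬ IsMaxNode T t →
    ξ t = ∑' k : {k : ℕ // t ++ [k] ∈ T}, ξ (t ++ [k.1])

/-- The set of infinite branches of `T`. -/
def limT (T : Set (List ℕ)) : Set (ℕ → ℕ) :=
  {x | ∀ n : ℕ, (List.range n).map x ∈ T}

/-- `T` is pruned: every node has a successor in `T`. -/
def Pruned (T : Set (List ℕ)) : Prop := ∀ t ∈ T, ∃ k : ℕ, t ++ [k] ∈ T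

/-- The basic clopen set `[t]` of branches through `t`. -/
def cyl (T : Set (List ℕ)) (t : List ℕ) : Set ↥(limT T) :=
  {x | (List.range t.length).map x.1 = t}

/-- `ξ` is free: all branches have measure (infimum) zero. -/
def FreeIPM (T : Set (List ℕ)) (ξ : List ℕ → ℝ≥0∞) : Prop :=
  ∀ x ∈ limT T, (⨅ n : ℕ, ξ ((List.range n).map x)) = 0

lemma child_le {T : Set (List ℕ)} {ξ : List ℕ → ℝ≥0∞} (hξ : IsIPM T ξ)
    {s : List ℕ} (hs : s ∈ T) {k : ℕ} (hk : s ++ [k] ∈ T) :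
    ξ (s ++ [k]) ≤ ξ s := by
  have hnm : ¬ IsMaxNode T s := fun h => h k hk
  rw [hξ.2 s hs hnm]
  exact ENNReal.le_tsum (⟨k, hk⟩ : {j : ℕ // s ++ [j] ∈ T})

lemma xi_mono {T : Set (List ℕ)} {ξ : List ℕ → ℝ≥0∞} (hT : IsTree T) (hξ : IsIPM T ξ) :
    ∀ (r s : List ℕ), s ++ r ∈ T → ξ (s ++ r) ≤ ξ s := by
  intro r
  induction r with
  | nil => intro s h; simp
  | cons k r' ih =>
    intro s h
    have h' : (s ++ [k]) ++ r' ∈ T := by simpa using h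
    have hk : s ++ [k] ∈ T := hT.2 _ _ ⟨r', by simp⟩ h'
    have hs : s ∈ T := hT.2 _ _ ⟨[k] ++ r', by simp⟩ h'
    calc ξ (s ++ (k :: r')) = ξ ((s ++ [k]) ++ r') := by simp
      _ ≤ ξ (s ++ [k]) := ih _ h'
      _ ≤ ξ s := child_le hξ hs hk

lemma take_eq_of_prefix {α : Type*} {l₁ l₂ : List α} (h : l₁ <+: l₂) {m : ℕ}
    (hm : m ≤ l₁.length) : l₁.take m = l₂.take m := by
  conv_lhs => rw [List.prefix_iff_eq_take.1 h]
  rw [List.take_take, min_eq_left hm]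

theorem stmt13 (T : Set (List ℕ)) (ξ : List ℕ → ℝ≥0∞)
    (hT : IsTree T) (hpr : Pruned T) (hξ : IsIPM T ξ) (hfree : FreeIPM T ξ) :
    ({t | t ∈ T ∧ 0 < ξ t}.Nonempty) ∧
    (∀ s t : List ℕ, s <+: t → (t ∈ T ∧ 0 < ξ t) → (s ∈ T ∧ 0 < ξ s)) ∧
    (∀ t : List ℕ, (t ∈ T ∧ 0 < ξ t) →
      ∃ s : List ℕ, (s ∈ T ∧ 0 < ξ s) ∧ t <+: s ∧
        ∃ k₁ k₂ : ℕ, k₁ ≠ k₂ ∧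
          (s ++ [k₁] ∈ T ∧ 0 < ξ (s ++ [k₁])) ∧
          (s ++ [k₂] ∈ T ∧ 0 < ξ (s ++ [k₂]))) := by
  have hnil : [] ∈ T := by
    obtain ⟨u, hu⟩ := hT.1
    exact hT.2 [] u u.nil_prefix hu
  have mono : ∀ s t : List ℕ, s <+: t → t ∈ T → ξ t ≤ ξ s := by
    rintro s t ⟨r, rfl⟩ ht
    exact xi_mono hT hξ r s ht
  refine ⟨⟨[], hnil, by rw [hξ.1]; exact zero_lt_one⟩, ?_, ?_⟩
  · intro s t hst ⟨ht, hpos⟩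
    exact ⟨hT.2 s t hst ht, lt_of_lt_of_le hpos (mono s t hst ht)⟩
  · intro t ht
    by_contra hcon
    push_neg at hcon
    have step : ∀ s : {l : List ℕ // l ∈ T ∧ ξ l = ξ t ∧ t <+: l},
        ∃ s' : {l : List ℕ // l ∈ T ∧ ξ l = ξ t ∧ t <+: l},
          s.1 <+: s'.1 ∧ s'.1.length = s.1.length + 1 := by
      rintro ⟨s, hsT, hsξ, hts⟩
      have hspos : 0 < ξ s := hsξ ▸ ht.2
      have hnm : ¬ IsMaxNode T s := by
        obtain ⟨k, hk⟩ := hpr s hsT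
        exact fun h => h k hk
      have hsum := hξ.2 s hsT hnm
      have hne : ∃ k : {k : ℕ // s ++ [k] ∈ T}, ξ (s ++ [k.1]) ≠ 0 := by
        by_contra hall
        push_neg at hall
        rw [hsum, ENNReal.tsum_eq_zero.2 hall] at hspos
        exact lt_irrefl 0 hspos
      obtain ⟨⟨k, hkT⟩, hkpos⟩ := hne
      have huniq : ∀ b : {k : ℕ // s ++ [k] ∈ T},
          b ≠ (⟨k, hkT⟩ : {k : ℕ // s ++ [k] ∈ T}) → ξ (s ++ [b.1]) = 0 := by
        rintro ⟨j, hjT⟩ hb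
        by_contra hj
        have hjk : k ≠ j := fun h => hb (by simp [Subtype.ext_iff, h.symm])
        have := hcon s ⟨hsT, hspos⟩ hts k j hjk ⟨hkT, pos_iff_ne_zero.2 hkpos⟩ hjT
        exact hj (le_antisymm this zero_le)
      have heq : ξ s = ξ (s ++ [k]) := by
        rw [hsum]
        exact tsum_eq_single (⟨k, hkT⟩ : {k : ℕ // s ++ [k] ∈ T}) huniq
      exact ⟨⟨s ++ [k], hkT, by rw [← heq, hsξ], hts.trans ⟨[k], rfl⟩⟩,
        ⟨[k], rfl⟩, by simp⟩
    choose F hFpre hFlen using step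
    set f : ℕ → {l : List ℕ // l ∈ T ∧ ξ l = ξ t ∧ t <+: l} :=
      fun n => F^[n] ⟨t, ht.1, rfl, List.prefix_refl t⟩ with hf
    have hfsucc : ∀ n, f (n + 1) = F (f n) := by
      intro n; simp [hf, Function.iterate_succ_apply']
    have hflen : ∀ n, (f n).1.length = t.length + n := by
      intro n
      induction n with
      | zero => simp [hf]
      | succ m ih => rw [hfsucc, hFlen, ih]; omega
    have hfchain : ∀ n, (f n).1 <+: (f (n + 1)).1 := fun n => by
      rw [hfsucc]; exact hFpre (f n)
    set x : ℕ → ℕ := fun n => (f (n + 1)).1.getD n 0 with hx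
    have key : ∀ n, (List.range n).map x = (f n).1.take n := by
      intro n
      induction n with
      | zero => simp
      | succ m ih =>
        have hlt : m < (f (m + 1)).1.length := by rw [hflen]; omega
        rw [List.range_succ, List.map_append, ih,
          take_eq_of_prefix (hfchain m) (by rw [hflen]; omega)]
        have hxm : x m = (f (m + 1)).1[m] := by
          simp [hx, List.getD, List.getElem?_eq_getElem hlt]
        rw [List.take_succ]
        simp [hxm, List.getElem?_eq_getElem hlt]
    have hxlim : x ∈ limT T := by
      intro n
      rw [key n]
      exact hT.2 _ _ (List.take_prefix n _) (f n).2.1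
    have hinf := hfree x hxlim
    have hge : ξ t ≤ ⨅ n : ℕ, ξ ((List.range n).map x) := by
      refine le_iInf fun n => ?_
      rw [key n]
      calc ξ t = ξ (f n).1 := ((f n).2.2.1).symm
        _ ≤ ξ ((f n).1.take n) := mono _ _ (List.take_prefix n _) (f n).2.1
    rw [hinf] at hge
    exact (ne_of_gt ht.2) (le_antisymm hge zero_le)
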